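/- Let G be a group, K a field, n a positive integer, and ρ : G → GL(n, K) a matrix representation. The set of field automorphisms γ of K for which there exist a character χ : G → Kˣ and a matrix M ∈ GL(n, K) such that for every g ∈ G, applying γ entrywise to ρ(g) equals χ(g) • (M * ρ(g) * M⁻¹), is a subgroup of the group of field automorphisms of K. -/

import Mathlib

open Matrix

private lemma map_smul_ring {K : Type*} [Field K] {n : ℕ} (f : K →+* K) (c : K)
    (A : Matrix (Fin n) (Fin n) K) : (c • A).map f = f c • A.map f := by
  ext i j
  simp [Matrix.map_apply, smul_eq_mul]

theorem extraTwists_form_subgroup (G : Type*) [Group G] (K : Type*) [Field K]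
    (n : ℕ) (hn : 0 < n) (ρ : G →* GL (Fin n) K) :
    ∃ H : Subgroup (K ≃+* K),
      ∀ γ : K ≃+* K, γ ∈ H ↔
        ∃ (χ : G →* Kˣ) (M : GL (Fin n) K), ∀ g : G,
          ((ρ g : Matrix (Fin n) (Fin n) K)).map γ
            = (χ g : K) • ((M * ρ g * M⁻¹ : GL (Fin n) K) : Matrix (Fin n) (Fin n) K) := by
  refine ⟨{
    carrier := {γ | ∃ (χ : G →* Kˣ) (M : GL (Fin n) K), ∀ g : G,
      ((ρ g : Matrix (Fin n) (Fin n) K)).map γ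
        = (χ g : K) • ((M * ρ g * M⁻¹ : GL (Fin n) K) : Matrix (Fin n) (Fin n) K)}
    mul_mem' := ?_
    one_mem' := ?_
    inv_mem' := ?_ }, fun γ => Iff.rfl⟩
  · rintro γ₁ γ₂ ⟨χ₁, M₁, h₁⟩ ⟨χ₂, M₂, h₂⟩
    set f₁ : Matrix (Fin n) (Fin n) K →+* Matrix (Fin n) (Fin n) K :=
      (γ₁ : K →+* K).mapMatrix with hf₁
    refine ⟨((Units.map (γ₁ : K →+* K)).comp χ₂) * χ₁, Units.map f₁ M₂ * M₁, fun g => ?_⟩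
    have lhs : ((ρ g : Matrix (Fin n) (Fin n) K)).map (γ₁ * γ₂)
        = (((ρ g : Matrix (Fin n) (Fin n) K)).map γ₂).map γ₁ := by
      rw [Matrix.map_map]; rfl
    rw [lhs, h₂ g]
    have hco : (⇑((γ₁ : K ≃+* K) : K →+* K) : K → K) = ⇑γ₁ := rfl
    rw [show (⇑γ₁ : K → K) = ⇑((γ₁ : K ≃+* K) : K →+* K) from rfl,
      map_smul_ring ((γ₁ : K ≃+* K) : K →+* K)]
    have coe2 : ((M₂ * ρ g * M₂⁻¹ : GL (Fin n) K) : Matrix (Fin n) (Fin n) K)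
        = (M₂ : Matrix (Fin n) (Fin n) K) * (ρ g : Matrix (Fin n) (Fin n) K)
          * ((M₂⁻¹ : GL (Fin n) K) : Matrix (Fin n) (Fin n) K) := by
      simp [Units.val_mul]
    rw [coe2]
    have mmul : ∀ A B : Matrix (Fin n) (Fin n) K,
        (A * B).map ((γ₁ : K ≃+* K) : K →+* K)
          = A.map ((γ₁ : K ≃+* K) : K →+* K) * B.map ((γ₁ : K ≃+* K) : K →+* K) :=
      fun A B => Matrix.map_mul
    rw [mmul, mmul, hco, h₁ g]
    have coeN : ((Units.map f₁ M₂ * M₁) * ρ g * (Units.map f₁ M₂ * M₁)⁻¹ : GL (Fin n) K)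
        = Units.map f₁ M₂ * (M₁ * ρ g * M₁⁻¹) * Units.map f₁ M₂⁻¹ := by
      rw [_root_.mul_inv_rev, map_inv]
      group
    rw [coeN]
    have coe3 : ((Units.map f₁ M₂ * (M₁ * ρ g * M₁⁻¹) * Units.map f₁ M₂⁻¹ : GL (Fin n) K)
          : Matrix (Fin n) (Fin n) K)
        = ((M₂ : Matrix (Fin n) (Fin n) K)).map γ₁
          * ((M₁ * ρ g * M₁⁻¹ : GL (Fin n) K) : Matrix (Fin n) (Fin n) K)
          * (((M₂⁻¹ : GL (Fin n) K) : Matrix (Fin n) (Fin n) K)).map γ₁ := by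
      simp [Units.val_mul, hf₁, RingHom.mapMatrix_apply]
    rw [coe3]
    simp only [MonoidHom.mul_apply, MonoidHom.comp_apply, Units.coe_map, Units.val_mul,
      MonoidHom.coe_coe]
    rw [mul_smul_comm, smul_mul_assoc, smul_smul]
    congr 2
  · refine ⟨1, 1, fun g => ?_⟩
    rw [show (⇑(1 : K ≃+* K) : K → K) = id from rfl, Matrix.map_id]
    simp
  · rintro γ ⟨χ, M, h⟩
    set fγ : K →+* K := ((γ⁻¹ : K ≃+* K) : K →+* K) with hfγ
    have hco : (⇑fγ : K → K) = ⇑(γ⁻¹ : K ≃+* K) := rfl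
    set f : Matrix (Fin n) (Fin n) K →+* Matrix (Fin n) (Fin n) K := fγ.mapMatrix with hf
    set U : GL (Fin n) K := Units.map f M with hU
    refine ⟨(((Units.map fγ).comp χ))⁻¹, U⁻¹, fun g => ?_⟩
    set c : Kˣ := Units.map fγ (χ g) with hc
    have mmul : ∀ A B : Matrix (Fin n) (Fin n) K,
        (A * B).map fγ = A.map fγ * B.map fγ := fun A B => Matrix.map_mul
    have hUc : (U : Matrix (Fin n) (Fin n) K)
        = (M : Matrix (Fin n) (Fin n) K).map fγ := by
      simp [hU, hf, RingHom.mapMatrix_apply]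
    have hUinv : ((U⁻¹ : GL (Fin n) K) : Matrix (Fin n) (Fin n) K)
        = ((M⁻¹ : GL (Fin n) K) : Matrix (Fin n) (Fin n) K).map fγ := by
      rw [hU, ← map_inv]
      simp [hf, RingHom.mapMatrix_apply]
    have h' : (ρ g : Matrix (Fin n) (Fin n) K)
        = (c : K) • ((U : Matrix (Fin n) (Fin n) K)
            * ((ρ g : Matrix (Fin n) (Fin n) K)).map (γ⁻¹ : K ≃+* K)
            * ((U⁻¹ : GL (Fin n) K) : Matrix (Fin n) (Fin n) K)) := by
      have h2 := congrArg (fun A => A.map fγ) (h g)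
      rw [Matrix.map_map] at h2
      have hid : (⇑fγ : K → K) ∘ (⇑γ : K → K) = id := by
        funext x
        exact γ.symm_apply_apply x
      rw [hid, Matrix.map_id] at h2
      have coe2 : ((M * ρ g * M⁻¹ : GL (Fin n) K) : Matrix (Fin n) (Fin n) K)
          = (M : Matrix (Fin n) (Fin n) K) * (ρ g : Matrix (Fin n) (Fin n) K)
            * ((M⁻¹ : GL (Fin n) K) : Matrix (Fin n) (Fin n) K) := by
        simp [Units.val_mul]
      rw [coe2, map_smul_ring fγ, mmul, mmul] at h2
      conv_lhs => rw [h2]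
      rw [hUc, hUinv]
      rfl
    have goal_coe : ((U⁻¹ * ρ g * (U⁻¹)⁻¹ : GL (Fin n) K) : Matrix (Fin n) (Fin n) K)
        = ((U⁻¹ : GL (Fin n) K) : Matrix (Fin n) (Fin n) K)
          * (ρ g : Matrix (Fin n) (Fin n) K) * (U : Matrix (Fin n) (Fin n) K) := by
      simp [Units.val_mul]
    conv_rhs => rw [goal_coe, h']
    simp only [MonoidHom.inv_apply, MonoidHom.comp_apply, Units.val_inv_eq_inv_val, ← hc]
    rw [mul_smul_comm, smul_mul_assoc, smul_smul,
      inv_mul_cancel₀ (Units.ne_zero c), one_smul]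
    have huu : ((U⁻¹ : GL (Fin n) K) : Matrix (Fin n) (Fin n) K)
        * (U : Matrix (Fin n) (Fin n) K) = 1 := by
      rw [← Units.val_mul, inv_mul_cancel, Units.val_one]
    rw [show ((U⁻¹ : GL (Fin n) K) : Matrix (Fin n) (Fin n) K)
          * ((U : Matrix (Fin n) (Fin n) K)
            * ((ρ g : Matrix (Fin n) (Fin n) K)).map (γ⁻¹ : K ≃+* K)
            * ((U⁻¹ : GL (Fin n) K) : Matrix (Fin n) (Fin n) K))
          * (U : Matrix (Fin n) (Fin n) K)
        = (((U⁻¹ : GL (Fin n) K) : Matrix (Fin n) (Fin n) K) * (U : Matrix (Fin n) (Fin n) K))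
          * ((ρ g : Matrix (Fin n) (Fin n) K)).map (γ⁻¹ : K ≃+* K)
          * (((U⁻¹ : GL (Fin n) K) : Matrix (Fin n) (Fin n) K) * (U : Matrix (Fin n) (Fin n) K))
        from by noncomm_ring, huu, one_mul, mul_one]
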